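/- Let ℓ be a prime, n ≥ 2, and γ ∈ GL₂(Z/ℓⁿZ) such that the characteristic polynomial of the reduction of γ modulo ℓ has two distinct roots in Z/ℓZ. Let w ∈ (Z/ℓ^{n−1}Z)² be a primitive vector that is an eigenvector of the reduction of γ modulo ℓ^{n−1}. Then there exists a primitive vector v ∈ (Z/ℓⁿZ)² that is an eigenvector of γ and whose reduction modulo ℓ^{n−1} equals u·w for some unit u ∈ (Z/ℓ^{n−1}Z)ˣ. -/

import Mathlib

/-- A vector in `(ZMod N)²` is primitive (w.r.t. `ℓ ∣ N`) if its reduction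
modulo `ℓ` is nonzero. -/
def IsPrimitive (ℓ N : ℕ) (h : ℓ ∣ N) (v : Fin 2 → ZMod N) : Prop :=
  (fun i => ZMod.castHom h (ZMod ℓ) (v i)) ≠ 0

private lemma hsub (n : ℕ) : n - 1 ≤ n := Nat.sub_le n 1

private lemma hne0 (n : ℕ) (hn : 2 ≤ n) : n ≠ 0 := by omega

private lemma hne1 (n : ℕ) (hn : 2 ≤ n) : n - 1 ≠ 0 := by omega

private lemma unit_lift' (ℓ m : ℕ) (hℓ : ℓ.Prime) (hm : m ≠ 0) (x : ZMod (ℓ^m))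
    (h : IsUnit (ZMod.castHom (dvd_pow_self ℓ hm) (ZMod ℓ) x)) : IsUnit x := by
  haveI : NeZero (ℓ^m) := ⟨pow_ne_zero m hℓ.pos.ne'⟩
  have hx : ((x.val : ℕ) : ZMod (ℓ^m)) = x := ZMod.natCast_zmod_val x
  have h2 : (ZMod.castHom (dvd_pow_self ℓ hm) (ZMod ℓ)) x = ((x.val : ℕ) : ZMod ℓ) := by
    rw [← hx]; simp
  rw [h2, ZMod.isUnit_iff_coprime] at h
  rw [← hx, ZMod.isUnit_iff_coprime]
  exact Nat.Coprime.pow_right _ h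

private lemma ker_cast' (ℓ n : ℕ) (hℓ : ℓ.Prime) (hn : 2 ≤ n) (x : ZMod (ℓ^n))
    (h : ZMod.castHom (pow_dvd_pow ℓ (hsub n)) (ZMod (ℓ^(n-1))) x = 0) :
    x * x = 0 := by
  haveI : NeZero (ℓ^n) := ⟨pow_ne_zero n hℓ.pos.ne'⟩
  have hx : ((x.val : ℕ) : ZMod (ℓ^n)) = x := ZMod.natCast_zmod_val x
  have h2 : ZMod.castHom (pow_dvd_pow ℓ (hsub n)) (ZMod (ℓ^(n-1))) x
      = ((x.val : ℕ) : ZMod (ℓ^(n-1))) := by rw [← hx]; simp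
  rw [h2, ZMod.natCast_eq_zero_iff] at h
  obtain ⟨k, hk⟩ := h
  have hxx : x = ((ℓ^(n-1) * k : ℕ) : ZMod (ℓ^n)) := by rw [← hk, hx]
  rw [hxx]
  have h3 : ((ℓ^(n-1) * k) * (ℓ^(n-1) * k) : ℕ) = (ℓ^n) * (ℓ^(n-2) * k * k) := by
    have h4 : ℓ^(n-1) * ℓ^(n-1) = ℓ^n * ℓ^(n-2) := by rw [← pow_add, ← pow_add]; congr 1; omega
    calc (ℓ^(n-1) * k) * (ℓ^(n-1) * k) = (ℓ^(n-1) * ℓ^(n-1)) * (k * k) := by ring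
    _ = (ℓ^n) * (ℓ^(n-2) * k * k) := by rw [h4]; ring
  rw [← Nat.cast_mul, h3, Nat.cast_mul, ZMod.natCast_self, zero_mul]

private lemma core' (ℓ n : ℕ) (hℓ : ℓ.Prime) (hn : 2 ≤ n) (a b c d : ZMod (ℓ^n))
    (hdisc : IsUnit (ZMod.castHom (dvd_pow_self ℓ (hne0 n hn)) (ZMod ℓ)
      ((a-d)^2 + 4*(b*c))))
    (w0 w1 x : ZMod (ℓ^(n-1))) (h0 : w0 * x = 1) (μ : ZMod (ℓ^(n-1)))
    (e1 : ZMod.castHom (pow_dvd_pow ℓ (hsub n)) (ZMod (ℓ^(n-1))) a * w0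
        + ZMod.castHom (pow_dvd_pow ℓ (hsub n)) (ZMod (ℓ^(n-1))) b * w1 = μ * w0)
    (e2 : ZMod.castHom (pow_dvd_pow ℓ (hsub n)) (ZMod (ℓ^(n-1))) c * w0
        + ZMod.castHom (pow_dvd_pow ℓ (hsub n)) (ZMod (ℓ^(n-1))) d * w1 = μ * w1) :
    ∃ s : ZMod (ℓ^n), b*s^2 + (a-d)*s - c = 0 ∧
      ZMod.castHom (pow_dvd_pow ℓ (hsub n)) (ZMod (ℓ^(n-1))) s = x * w1 := by
  haveI : NeZero (ℓ^(n-1)) := ⟨pow_ne_zero _ hℓ.pos.ne'⟩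
  set π := ZMod.castHom (pow_dvd_pow ℓ (hsub n)) (ZMod (ℓ^(n-1))) with hπ
  set ρ := ZMod.castHom (dvd_pow_self ℓ (hne0 n hn)) (ZMod ℓ) with hρ
  set ρ' := ZMod.castHom (dvd_pow_self ℓ (hne1 n hn)) (ZMod ℓ) with hρ'
  have hcomp : ∀ y : ZMod (ℓ^n), ρ y = ρ' (π y) := by
    intro y
    have := ZMod.castHom_comp (dvd_pow_self ℓ (hne1 n hn))
      (pow_dvd_pow ℓ (hsub n))
    rw [hρ, hρ', hπ, ← this]; rfl
  have hF : π b * (x*w1)^2 + (π a - π d) * (x*w1) - π c = 0 := by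
    linear_combination (x^2 * w1) * e1 - x * e2 + (μ*w1*x + π c - π a*x*w1) * h0
  set t' : ZMod (ℓ^n) := (((x*w1).val : ℕ) : ZMod (ℓ^n)) with ht'
  have hπt' : π t' = x * w1 := by rw [ht']; simp [ZMod.natCast_zmod_val]
  have hπe : π (b*t'^2 + (a-d)*t' - c) = 0 := by
    push_cast [map_sub, map_add, map_mul, map_pow, hπt']; exact hF
  have he2 : (b*t'^2 + (a-d)*t' - c) * (b*t'^2 + (a-d)*t' - c) = 0 :=
    ker_cast' ℓ n hℓ hn _ hπe
  have hρF : ρ (b*t'^2 + (a-d)*t' - c) = 0 := by rw [hcomp, hπe]; simp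
  have hDsq : ρ (2*b*t' + (a - d)) * ρ (2*b*t' + (a - d))
      = ρ ((a-d)^2 + 4*(b*c)) + 4 * ρ b * ρ (b*t'^2 + (a-d)*t' - c) := by
    push_cast [map_add, map_mul, map_sub, map_pow, map_ofNat]; ring
  have hDunit : IsUnit (ρ (2*b*t' + (a - d))) := by
    haveI : Fact ℓ.Prime := ⟨hℓ⟩
    have hne : ρ (2*b*t' + (a - d)) * ρ (2*b*t' + (a - d)) ≠ 0 := by
      rw [hDsq, hρF]; simpa using hdisc.ne_zero
    exact isUnit_of_mul_isUnit_left (Ne.isUnit hne)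
  have hDu : IsUnit (2*b*t' + (a - d)) := unit_lift' ℓ n hℓ (hne0 n hn) _ hDunit
  obtain ⟨u, hu⟩ := hDu
  have hinv : (2*b*t' + (a - d)) * ((u⁻¹ : (ZMod (ℓ^n))ˣ) : ZMod (ℓ^n)) = 1 := by
    rw [← hu]; exact_mod_cast u.mul_inv
  set iD : ZMod (ℓ^n) := ((u⁻¹ : (ZMod (ℓ^n))ˣ) : ZMod (ℓ^n)) with hiD
  refine ⟨t' - (b*t'^2 + (a-d)*t' - c) * iD, ?_, ?_⟩
  · linear_combination (-(b*t'^2+(a-d)*t'-c)) * hinv + (b*iD^2) * he2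
  · rw [map_sub, map_mul, hπe, hπt']; ring

private lemma charpoly_root_eq' {K : Type*} [CommRing K] (M : Matrix (Fin 2) (Fin 2) K) (μ : K)
    (h : M.charpoly.IsRoot μ) :
    μ^2 - (M 0 0 + M 1 1) * μ + (M 0 0 * M 1 1 - M 0 1 * M 1 0) = 0 := by
  rw [Matrix.charpoly, Matrix.det_fin_two] at h
  simp [Matrix.charmatrix_apply_eq, Matrix.charmatrix_apply_ne, Polynomial.IsRoot] at h
  linear_combination h

/-- If the characteristic polynomial of the reduction of `γ ∈ GL₂(ℤ/ℓⁿℤ)`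
mod `ℓ` has two distinct roots and `w` is a primitive eigenvector of `γ mod ℓ^(n-1)`, then
there is a primitive eigenvector `v` of `γ` reducing to a unit multiple of `w`. -/
theorem stmt_1 (ℓ n : ℕ) (hℓ : ℓ.Prime) (hn : 2 ≤ n)
    (γ : Matrix.GeneralLinearGroup (Fin 2) (ZMod (ℓ ^ n)))
    (hroots : ∃ μ₁ μ₂ : ZMod ℓ, μ₁ ≠ μ₂ ∧
      ((γ.val.map (ZMod.castHom (dvd_pow_self ℓ (by omega : n ≠ 0)) (ZMod ℓ))).charpoly).IsRoot μ₁ ∧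
      ((γ.val.map (ZMod.castHom (dvd_pow_self ℓ (by omega : n ≠ 0)) (ZMod ℓ))).charpoly).IsRoot μ₂)
    (w : Fin 2 → ZMod (ℓ ^ (n - 1)))
    (hw : IsPrimitive ℓ (ℓ ^ (n - 1)) (dvd_pow_self ℓ (by omega : n - 1 ≠ 0)) w)
    (hwev : ∃ μ : ZMod (ℓ ^ (n - 1)),
      (γ.val.map (ZMod.castHom (pow_dvd_pow ℓ (by omega : n - 1 ≤ n)) (ZMod (ℓ ^ (n - 1))))).mulVec w
        = μ • w) :
    ∃ v : Fin 2 → ZMod (ℓ ^ n),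
      IsPrimitive ℓ (ℓ ^ n) (dvd_pow_self ℓ (by omega : n ≠ 0)) v ∧
      (∃ lam : ZMod (ℓ ^ n), γ.val.mulVec v = lam • v) ∧
      ∃ u : (ZMod (ℓ ^ (n - 1)))ˣ,
        (fun i => ZMod.castHom (pow_dvd_pow ℓ (by omega : n - 1 ≤ n)) (ZMod (ℓ ^ (n - 1))) (v i))
          = (u : ZMod (ℓ ^ (n - 1))) • w := by
  haveI : Fact ℓ.Prime := ⟨hℓ⟩
  -- the discriminant is a unit mod ℓ
  have hdisc : IsUnit (ZMod.castHom (dvd_pow_self ℓ (by omega : n ≠ 0)) (ZMod ℓ)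
      ((γ.val 0 0 - γ.val 1 1)^2 + 4*(γ.val 0 1 * γ.val 1 0))) := by
    set ρ := ZMod.castHom (dvd_pow_self ℓ (by omega : n ≠ 0)) (ZMod ℓ) with hρ
    obtain ⟨μ₁, μ₂, hne, h1, h2⟩ := hroots
    have r1 := charpoly_root_eq' _ _ h1
    have r2 := charpoly_root_eq' _ _ h2
    simp only [Matrix.map_apply] at r1 r2
    have htr : ρ (γ.val 0 0) + ρ (γ.val 1 1) = μ₁ + μ₂ := by
      have h3 : (μ₁ - μ₂) * (μ₁ + μ₂ - (ρ (γ.val 0 0) + ρ (γ.val 1 1))) = 0 := by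
        linear_combination r1 - r2
      rcases mul_eq_zero.mp h3 with h4 | h4
      · exact absurd (sub_eq_zero.mp h4) hne
      · linear_combination -h4
    have hdet : ρ (γ.val 0 0) * ρ (γ.val 1 1) - ρ (γ.val 0 1) * ρ (γ.val 1 0) = μ₁ * μ₂ := by
      linear_combination r1 + μ₁ * htr
    have hval : ρ ((γ.val 0 0 - γ.val 1 1)^2 + 4*(γ.val 0 1 * γ.val 1 0)) = (μ₁ - μ₂)^2 := by
      push_cast [map_add, map_mul, map_sub, map_pow, map_ofNat]
      linear_combination (ρ (γ.val 0 0) + ρ (γ.val 1 1) + μ₁ + μ₂) * htr - 4 * hdet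
    rw [hval]
    exact Ne.isUnit (pow_ne_zero 2 (sub_ne_zero.mpr hne))
  have hdisc' : IsUnit (ZMod.castHom (dvd_pow_self ℓ (by omega : n ≠ 0)) (ZMod ℓ)
      ((γ.val 1 1 - γ.val 0 0)^2 + 4*(γ.val 1 0 * γ.val 0 1))) := by
    have heq : (γ.val 1 1 - γ.val 0 0)^2 + 4*(γ.val 1 0 * γ.val 0 1)
        = (γ.val 0 0 - γ.val 1 1)^2 + 4*(γ.val 0 1 * γ.val 1 0) := by ring
    rwa [heq]
  -- eigenvector equations mod ℓ^{n-1}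
  obtain ⟨μ, hμ⟩ := hwev
  have e1 : ZMod.castHom (pow_dvd_pow ℓ (by omega : n - 1 ≤ n)) (ZMod (ℓ^(n-1))) (γ.val 0 0) * w 0
      + ZMod.castHom (pow_dvd_pow ℓ (by omega : n - 1 ≤ n)) (ZMod (ℓ^(n-1))) (γ.val 0 1) * w 1
      = μ * w 0 := by
    have h := congrFun hμ 0
    simpa [Matrix.mulVec, dotProduct, Fin.sum_univ_two, Matrix.map_apply,
      smul_eq_mul] using h
  have e2 : ZMod.castHom (pow_dvd_pow ℓ (by omega : n - 1 ≤ n)) (ZMod (ℓ^(n-1))) (γ.val 1 0) * w 0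
      + ZMod.castHom (pow_dvd_pow ℓ (by omega : n - 1 ≤ n)) (ZMod (ℓ^(n-1))) (γ.val 1 1) * w 1
      = μ * w 1 := by
    have h := congrFun hμ 1
    simpa [Matrix.mulVec, dotProduct, Fin.sum_univ_two, Matrix.map_apply,
      smul_eq_mul] using h
  -- a coordinate of w is a unit
  obtain ⟨i, hi⟩ := Function.ne_iff.mp hw
  have hwunit : ∀ j : Fin 2,
      ZMod.castHom (dvd_pow_self ℓ (by omega : n - 1 ≠ 0)) (ZMod ℓ) (w j) ≠ 0 → IsUnit (w j) :=
    fun j hj => unit_lift' ℓ (n-1) hℓ (by omega) _ (Ne.isUnit hj)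
  fin_cases i
  · -- w 0 is a unit
    obtain ⟨u0, hu0⟩ := hwunit 0 (by simpa using hi)
    have h0 : w 0 * ((u0⁻¹ : (ZMod (ℓ^(n-1)))ˣ) : ZMod (ℓ^(n-1))) = 1 := by
      rw [← hu0]; exact_mod_cast u0.mul_inv
    obtain ⟨s, hs, hπs⟩ := core' ℓ n hℓ hn (γ.val 0 0) (γ.val 0 1) (γ.val 1 0) (γ.val 1 1)
      hdisc (w 0) (w 1) _ h0 μ e1 e2
    refine ⟨![1, s], ?_, ⟨γ.val 0 0 + γ.val 0 1 * s, ?_⟩, u0⁻¹, ?_⟩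
    · intro hcon
      have h00 := congrFun hcon 0
      simp only [Matrix.cons_val_zero, map_one, Pi.zero_apply] at h00
      exact one_ne_zero h00
    · funext j
      fin_cases j
      · show (γ.val.mulVec ![1, s]) 0 = _
        simp only [Matrix.mulVec, dotProduct, Fin.sum_univ_two, Matrix.cons_val_zero,
          Matrix.cons_val_one, Matrix.head_cons, Pi.smul_apply, smul_eq_mul, Fin.zero_eta, Fin.mk_one]
        ring
      · show (γ.val.mulVec ![1, s]) 1 = _
        simp only [Matrix.mulVec, dotProduct, Fin.sum_univ_two, Matrix.cons_val_zero,
          Matrix.cons_val_one, Matrix.head_cons, Pi.smul_apply, smul_eq_mul, Fin.zero_eta, Fin.mk_one]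
        linear_combination -hs
    · funext j
      fin_cases j
      · show ZMod.castHom (pow_dvd_pow ℓ (by omega : n - 1 ≤ n)) (ZMod (ℓ^(n-1))) (![1, s] 0)
          = _
        simp only [Matrix.cons_val_zero, map_one, Pi.smul_apply, smul_eq_mul, Fin.zero_eta, Fin.mk_one]
        linear_combination -h0
      · show ZMod.castHom (pow_dvd_pow ℓ (by omega : n - 1 ≤ n)) (ZMod (ℓ^(n-1))) (![1, s] 1)
          = _
        simp only [Matrix.cons_val_one, Matrix.cons_val_zero, Matrix.head_cons, Pi.smul_apply, smul_eq_mul, Fin.zero_eta, Fin.mk_one]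
        rw [hπs]
  · -- w 1 is a unit
    obtain ⟨u0, hu0⟩ := hwunit 1 (by simpa using hi)
    have h0 : w 1 * ((u0⁻¹ : (ZMod (ℓ^(n-1)))ˣ) : ZMod (ℓ^(n-1))) = 1 := by
      rw [← hu0]; exact_mod_cast u0.mul_inv
    have e1' : ZMod.castHom (pow_dvd_pow ℓ (by omega : n - 1 ≤ n)) (ZMod (ℓ^(n-1))) (γ.val 1 1) * w 1
        + ZMod.castHom (pow_dvd_pow ℓ (by omega : n - 1 ≤ n)) (ZMod (ℓ^(n-1))) (γ.val 1 0) * w 0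
        = μ * w 1 := by linear_combination e2
    have e2' : ZMod.castHom (pow_dvd_pow ℓ (by omega : n - 1 ≤ n)) (ZMod (ℓ^(n-1))) (γ.val 0 1) * w 1
        + ZMod.castHom (pow_dvd_pow ℓ (by omega : n - 1 ≤ n)) (ZMod (ℓ^(n-1))) (γ.val 0 0) * w 0
        = μ * w 0 := by linear_combination e1
    obtain ⟨s, hs, hπs⟩ := core' ℓ n hℓ hn (γ.val 1 1) (γ.val 1 0) (γ.val 0 1) (γ.val 0 0)
      hdisc' (w 1) (w 0) _ h0 μ e1' e2'
    refine ⟨![s, 1], ?_, ⟨γ.val 1 0 * s + γ.val 1 1, ?_⟩, u0⁻¹, ?_⟩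
    · intro hcon
      have h00 := congrFun hcon 1
      simp only [Matrix.cons_val_one, Matrix.cons_val_zero, Matrix.head_cons, map_one, Pi.zero_apply] at h00
      exact one_ne_zero h00
    · funext j
      fin_cases j
      · show (γ.val.mulVec ![s, 1]) 0 = _
        simp only [Matrix.mulVec, dotProduct, Fin.sum_univ_two, Matrix.cons_val_zero,
          Matrix.cons_val_one, Matrix.head_cons, Pi.smul_apply, smul_eq_mul, Fin.zero_eta, Fin.mk_one]
        linear_combination -hs
      · show (γ.val.mulVec ![s, 1]) 1 = _
        simp only [Matrix.mulVec, dotProduct, Fin.sum_univ_two, Matrix.cons_val_zero,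
          Matrix.cons_val_one, Matrix.head_cons, Pi.smul_apply, smul_eq_mul, Fin.zero_eta, Fin.mk_one]
        ring
    · funext j
      fin_cases j
      · show ZMod.castHom (pow_dvd_pow ℓ (by omega : n - 1 ≤ n)) (ZMod (ℓ^(n-1))) (![s, 1] 0)
          = _
        simp only [Matrix.cons_val_zero, Pi.smul_apply, smul_eq_mul, Fin.zero_eta, Fin.mk_one]
        rw [hπs]
      · show ZMod.castHom (pow_dvd_pow ℓ (by omega : n - 1 ≤ n)) (ZMod (ℓ^(n-1))) (![s, 1] 1)
          = _
        simp only [Matrix.cons_val_one, Matrix.cons_val_zero, Matrix.head_cons, map_one, Pi.smul_apply, smul_eq_mul, Fin.zero_eta, Fin.mk_one]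
        linear_combination -h0
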